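/- Fix σ², G, K, η, p, p_b, W, λ > 0, define A, X, z†, E^lim, α, z‡, E^o, γ as follows: A := G²ηp/σ², X := Gη(pG + p_b·K)/σ², z† > 1 solves z·ln z − z + 1 = A, E^lim := p_b(z†−1)/(z†−1+X), α := λW·G·η·K/(z†·σ²·ln 2), z‡ > 1 solves z·ln z − z + 1 = X, E^o := p_b(z‡−1)/(z‡−1+X), and for 0 ≤ μ < α, γ(μ) := p_b(z^§(μ)−1)σ²/((z^§(μ)−1)σ² + Gη(pG + p_b·K)) with z^§(μ) > 1 the unique solution of z·ln z + (μ·p_b·ln 2/(λW) − 1)·z + 1 = X. Define S(E) := λW·Gη(pG + EK)/(z†·σ²·ln 2) for 0 ≤ E ≤ E^lim and S(E) := λW(1 − E/p_b)·log₂(1 + X·E/(p_b − E)) for E^lim < E < p_b, and U(E) := S(E) − μ·E. Then: if μ ≥ α, E = 0 is a global maximizer of U on [0, p_b); if 0 < μ < α, then E = γ(μ) is the unique global maximizer of U on [0, p_b). -/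

import Mathlib

private lemma log_le_lin {z w : ℝ} (hz : 0 < z) (hw : 0 < w) :
    Real.log z - Real.log w ≤ (z - w) / w := by
  have h := Real.log_le_sub_one_of_pos (div_pos hz hw)
  rw [Real.log_div hz.ne' hw.ne'] at h
  have h2 : z / w - 1 = (z - w) / w := by field_simp
  rw [h2] at h; exact h

private lemma log_lt_lin {z w : ℝ} (hz : 0 < z) (hw : 0 < w) (hne : z ≠ w) :
    Real.log z - Real.log w < (z - w) / w := by
  have hzw : z / w ≠ 1 := by
    intro h
    rw [div_eq_one_iff_eq hw.ne'] at h
    exact hne h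
  have h := Real.log_lt_sub_one_of_pos (div_pos hz hw) hzw
  rw [Real.log_div hz.ne' hw.ne'] at h
  have h2 : z / w - 1 = (z - w) / w := by field_simp
  rw [h2] at h; exact h

private lemma coreLe (c0 X m w z : ℝ) (hc0 : 0 < c0) (hX : 0 < X) (hw : 1 < w) (hz : 1 < z) :
    (c0*X*Real.log z - m*(z-1))*(w-1+X) - (c0*X*Real.log w - m*(w-1))*(z-1+X)
      ≤ X*(z-w)/w * (c0*(X - (w*Real.log w - w + 1)) - m*w) := by
  have hw0 : (0:ℝ) < w := by linarith
  have hlog := log_le_lin (show (0:ℝ) < z by linarith) hw0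
  have hD : (0:ℝ) < w - 1 + X := by linarith
  have hid : (c0*X*Real.log z - m*(z-1))*(w-1+X) - (c0*X*Real.log w - m*(w-1))*(z-1+X)
      - X*(z-w)/w * (c0*(X - (w*Real.log w - w + 1)) - m*w)
      = c0*X*(w-1+X) * (Real.log z - Real.log w - (z-w)/w) := by
    field_simp
    ring
  have hfac : 0 < c0*X*(w-1+X) := mul_pos (mul_pos hc0 hX) hD
  nlinarith [mul_nonpos_of_nonneg_of_nonpos hfac.le
    (by linarith : Real.log z - Real.log w - (z-w)/w ≤ 0)]

private lemma coreLt (c0 X m w z : ℝ) (hc0 : 0 < c0) (hX : 0 < X) (hw : 1 < w) (hz : 1 < z)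
    (hne : z ≠ w) :
    (c0*X*Real.log z - m*(z-1))*(w-1+X) - (c0*X*Real.log w - m*(w-1))*(z-1+X)
      < X*(z-w)/w * (c0*(X - (w*Real.log w - w + 1)) - m*w) := by
  have hw0 : (0:ℝ) < w := by linarith
  have hlog := log_lt_lin (show (0:ℝ) < z by linarith) hw0 hne
  have hD : (0:ℝ) < w - 1 + X := by linarith
  have hid : (c0*X*Real.log z - m*(z-1))*(w-1+X) - (c0*X*Real.log w - m*(w-1))*(z-1+X)
      - X*(z-w)/w * (c0*(X - (w*Real.log w - w + 1)) - m*w)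
      = c0*X*(w-1+X) * (Real.log z - Real.log w - (z-w)/w) := by
    field_simp
    ring
  have hfac : 0 < c0*X*(w-1+X) := mul_pos (mul_pos hc0 hX) hD
  nlinarith [mul_neg_of_pos_of_neg hfac
    (by linarith : Real.log z - Real.log w - (z-w)/w < 0)]

private lemma xlogx_mono {w v : ℝ} (hw : 1 ≤ w) (hwv : w ≤ v) :
    w * Real.log w - w ≤ v * Real.log v - v := by
  have hv : (0:ℝ) < v := by linarith
  have h := log_le_lin (show (0:ℝ) < w by linarith) hv
  have hlw : 0 ≤ Real.log w := Real.log_nonneg hw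
  have h2 : v * (Real.log w - Real.log v) ≤ v * ((w - v) / v) :=
    mul_le_mul_of_nonneg_left h hv.le
  have h3 : v * ((w - v) / v) = w - v := by field_simp
  rw [h3] at h2
  nlinarith [mul_nonneg (sub_nonneg.2 hwv) hlw]

private lemma sign_le {a P : ℝ} (hP : 0 < P) (h : a * P ≤ 0) : a ≤ 0 := by
  nlinarith

private lemma sign_lt {a P : ℝ} (hP : 0 < P) (h : a * P < 0) : a < 0 := by
  nlinarith

set_option maxHeartbeats 2000000 in
theorem stmt_15 (σ2 G K η p pb W lam μ : ℝ)
    (hσ2 : 0 < σ2) (hG : 0 < G) (hK : 0 < K) (hη : 0 < η)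
    (hp : 0 < p) (hpb : 0 < pb) (hW : 0 < W) (hlam : 0 < lam)
    (A X : ℝ)
    (hA : A = G ^ 2 * η * p / σ2)
    (hX : X = G * η * (p * G + pb * K) / σ2)
    (zdag : ℝ) (hzdag1 : 1 < zdag)
    (hzdag : zdag * Real.log zdag - zdag + 1 = A)
    (zdd : ℝ) (hzdd1 : 1 < zdd)
    (hzdd : zdd * Real.log zdd - zdd + 1 = X)
    (Elim Eo α : ℝ)
    (hElim : Elim = pb * (zdag - 1) / (zdag - 1 + X))
    (hEo : Eo = pb * (zdd - 1) / (zdd - 1 + X))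
    (hα : α = lam * W * G * η * K / (zdag * σ2 * Real.log 2))
    (zsect : ℝ → ℝ)
    (hzsect : ∀ m : ℝ, 0 ≤ m → m < α → 1 < zsect m ∧
      zsect m * Real.log (zsect m)
        + (m * pb * Real.log 2 / (lam * W) - 1) * zsect m + 1 = X)
    (γ : ℝ → ℝ)
    (hγ : ∀ m : ℝ, γ m = pb * (zsect m - 1) * σ2 /
      ((zsect m - 1) * σ2 + G * η * (p * G + pb * K)))
    (S U : ℝ → ℝ)
    (hS1 : ∀ E : ℝ, 0 ≤ E → E ≤ Elim →
      S E = lam * W * G * η * (p * G + E * K) / (zdag * σ2 * Real.log 2))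
    (hS2 : ∀ E : ℝ, Elim < E → E < pb →
      S E = lam * W * (1 - E / pb) * Real.logb 2 (1 + X * E / (pb - E)))
    (hU : ∀ E : ℝ, U E = S E - μ * E) :
    (α ≤ μ → ∀ E ∈ Set.Ico (0 : ℝ) pb, U E ≤ U 0) ∧
    (0 < μ → μ < α →
      (∀ E ∈ Set.Ico (0 : ℝ) pb, U E ≤ U (γ μ)) ∧
      (∀ E ∈ Set.Ico (0 : ℝ) pb, U E = U (γ μ) → E = γ μ)) := by
  have hL : (0:ℝ) < Real.log 2 := Real.log_pos one_lt_two
  have hc0 : (0:ℝ) < lam*W/Real.log 2 := by positivity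
  have hX0 : 0 < X := by rw [hX]; positivity
  have hA0 : 0 < A := by rw [hA]; positivity
  have hXA : X - A = G*η*K*pb/σ2 := by rw [hX, hA]; field_simp; ring
  have hXA0 : 0 < X - A := by rw [hXA]; positivity
  have hzd0 : (0:ℝ) < zdag := by linarith
  have hDdag : 0 < zdag - 1 + X := by linarith
  have hElim0 : 0 < Elim := by
    rw [hElim]; exact div_pos (mul_pos hpb (by linarith)) hDdag
  have hElimpb : Elim < pb := by
    rw [hElim, div_lt_iff₀ hDdag]; linarith [mul_pos hpb hX0]
  have hα' : α * (pb*zdag) = (lam*W/Real.log 2)*(X-A) := by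
    rw [hα, hXA]; field_simp
  have hlin : ∀ E, 0 ≤ E → E ≤ Elim →
      U E = lam*W*A/(zdag*Real.log 2) + E*(α-μ) := by
    intro E h0 h1
    rw [hU, hS1 E h0 h1, hα, hA]
    field_simp
    ring
  have hU0 : U 0 = lam*W*A/(zdag*Real.log 2) := by
    have := hlin 0 le_rfl hElim0.le; simpa using this
  have hlogzdag : Real.log zdag = (A + zdag - 1)/zdag := by
    rw [eq_div_iff hzd0.ne']; linarith
  have hGK : lam*W*G*η*K = lam*W*(X-A)*σ2/pb := by
    rw [hXA]; field_simp
  have hUElim : U Elim * (zdag - 1 + X)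
      = lam*W*X*Real.log zdag/Real.log 2 - μ*pb*(zdag-1) := by
    rw [hlin Elim hElim0.le le_rfl, hElim, hα, hlogzdag, hGK]
    field_simp
    ring
  -- the change of variables on the second branch
  have key2 : ∀ E, Elim < E → E < pb → ∃ z, 1 < z ∧ zdag < z ∧
      E = pb*(z-1)/(z-1+X) ∧
      U E * (z-1+X) = lam*W*X*Real.log (z)/Real.log 2 - μ*pb*(z-1) := by
    intro E h1 h2
    have hE0 : 0 < E := lt_trans hElim0 h1
    have hpbE : 0 < pb - E := by linarith
    have hpbEl : 0 < pb - Elim := by linarith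
    have hz1 : 1 < 1 + X*E/(pb-E) := by
      have : 0 < X*E/(pb-E) := by positivity
      linarith
    have e1 : (zdag - 1)*(pb - Elim) = X*Elim := by
      rw [hElim]; field_simp; ring
    have h4 : (zdag-1)*(pb-E) < X*E := by
      have h5 : (zdag-1)*(pb-E)*(pb-Elim) < X*E*(pb-Elim) := by
        have e2 : (zdag-1)*(pb-E)*(pb-Elim) = X*Elim*(pb-E) := by
          linear_combination (pb-E)*e1
        rw [e2]
        linarith [mul_pos (mul_pos hX0 hpb) (sub_pos.2 h1)]
      exact lt_of_mul_lt_mul_right h5 hpbEl.le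
    have hzd : zdag < 1 + X*E/(pb-E) := by
      have : zdag - 1 < X*E/(pb-E) := (lt_div_iff₀ hpbE).mpr h4
      linarith
    refine ⟨1 + X*E/(pb-E), hz1, hzd, ?_, ?_⟩
    · field_simp
      have hd : pb - E + E * X - (pb - E) + X * (pb - E) = pb * X := by ring
      rw [hd, eq_div_iff (mul_pos hpb hX0).ne']
      ring
    · rw [hU, hS2 E h1 h2, Real.logb]
      field_simp
      ring
  constructor
  · -- case μ ≥ α
    intro hαμ E hE
    obtain ⟨hE0, hEpb⟩ := hE
    rcases le_or_gt E Elim with hc | hc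
    · rw [hlin E hE0 hc, hU0]
      linarith [mul_nonpos_of_nonneg_of_nonpos hE0 (sub_nonpos.2 hαμ)]
    · obtain ⟨z, hz1, hzd, hEeq, hUEeq⟩ := key2 E hc hEpb
      have hDz : 0 < z - 1 + X := by linarith
      have hcore := coreLe (lam*W/Real.log 2) X (μ*pb) zdag z hc0 hX0 hzdag1 hz1
      rw [hzdag] at hcore
      have hfac1 : 0 ≤ X*(z-zdag)/zdag :=
        div_nonneg (mul_nonneg hX0.le (by linarith)) hzd0.le
      have hfac2 : (lam*W/Real.log 2)*(X-A) - μ*pb*zdag ≤ 0 := by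
        linarith [hα', mul_nonneg (sub_nonneg.2 hαμ) (mul_pos hpb hzd0).le]
      have hN : ((lam*W/Real.log 2)*X*Real.log z - μ*pb*(z-1))*(zdag-1+X)
          - ((lam*W/Real.log 2)*X*Real.log zdag - μ*pb*(zdag-1))*(z-1+X) ≤ 0 :=
        le_trans hcore (mul_nonpos_of_nonneg_of_nonpos hfac1 hfac2)
      have hid2 : (U E - U Elim) * ((z-1+X)*(zdag-1+X))
          = ((lam*W/Real.log 2)*X*Real.log z - μ*pb*(z-1))*(zdag-1+X)
          - ((lam*W/Real.log 2)*X*Real.log zdag - μ*pb*(zdag-1))*(z-1+X) := by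
        linear_combination (zdag-1+X)*hUEeq - (z-1+X)*hUElim
      have hUE : U E ≤ U Elim := by
        have h6 : (U E - U Elim) * ((z-1+X)*(zdag-1+X)) ≤ 0 := hid2.trans_le hN
        have := sign_le (mul_pos hDz hDdag) h6
        linarith
      have : U Elim ≤ U 0 := by
        rw [hlin Elim hElim0.le le_rfl, hU0]
        linarith [mul_nonpos_of_nonneg_of_nonpos hElim0.le (sub_nonpos.2 hαμ)]
      linarith
  · -- case 0 < μ < α
    intro hμ0 hμα
    obtain ⟨hw1, hweq⟩ := hzsect μ hμ0.le hμα
    set w := zsect μ with hwdef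
    have hDw : 0 < w - 1 + X := by linarith
    have hQw : (lam*W/Real.log 2)*(X - (w*Real.log w - w + 1)) - μ*pb*w = 0 := by
      have hXw : X - (w*Real.log w - w + 1) = μ*pb*Real.log 2/(lam*W)*w := by
        linear_combination -hweq
      rw [hXw]
      field_simp
      ring
    have hQd_pos : 0 < (lam*W/Real.log 2)*(X-A) - μ*pb*zdag := by
      linarith [hα', mul_pos (sub_pos.2 hμα) (mul_pos hpb hzd0)]
    have hwzdag : zdag < w := by
      by_contra hle
      push_neg at hle
      have hmono := xlogx_mono hw1.le hle
      have hbr : (lam*W/Real.log 2)*(X - (zdag*Real.log zdag - zdag + 1))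
          = (lam*W/Real.log 2)*(X-A) := by rw [hzdag]
      linarith [hQw, hQd_pos, hbr,
        mul_le_mul_of_nonneg_left hmono hc0.le,
        mul_nonneg (mul_pos hμ0 hpb).le (sub_nonneg.2 hle)]
    have hGX : G*η*(p*G+pb*K) = X*σ2 := by rw [hX]; field_simp
    have hγval : γ μ = pb*(w-1)/(w-1+X) := by
      have h1 : (0:ℝ) < (w-1)*σ2 + G*η*(p*G+pb*K) := by
        rw [hGX]; linarith [mul_pos hX0 hσ2, mul_pos (show (0:ℝ) < w-1 by linarith) hσ2]
      rw [hγ, div_eq_div_iff h1.ne' hDw.ne', hGX]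
      ring
    have hElimγ : Elim < γ μ := by
      rw [hElim, hγval, div_lt_div_iff₀ hDdag hDw]
      linarith [mul_pos (mul_pos hpb hX0) (sub_pos.2 hwzdag)]
    have hγpb : γ μ < pb := by
      rw [hγval, div_lt_iff₀ hDw]
      linarith [mul_pos hpb hX0]
    obtain ⟨z', hz'1, _, hEγ, hUγ'⟩ := key2 (γ μ) hElimγ hγpb
    have hz'w : z' = w := by
      have hDz' : 0 < z' - 1 + X := by linarith
      have h2 : pb*(z'-1)/(z'-1+X) = pb*(w-1)/(w-1+X) := by rw [← hEγ, hγval]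
      rw [div_eq_div_iff hDz'.ne' hDw.ne'] at h2
      have h3 : (pb*X)*z' = (pb*X)*w := by linear_combination h2
      exact mul_left_cancel₀ (by positivity) h3
    rw [hz'w] at hUγ'
    -- the main strict bound
    have main : ∀ E, 0 ≤ E → E < pb → E ≠ γ μ → U E < U (γ μ) := by
      intro E hE0 hEpb hne
      rcases le_or_gt E Elim with hc | hc
      · -- linear part: U E ≤ U Elim < U (γ μ)
        have hcore := coreLt (lam*W/Real.log 2) X (μ*pb) w zdag hc0 hX0 hw1 hzdag1
          (ne_of_lt hwzdag)
        rw [hQw, mul_zero] at hcore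
        have hid2 : (U Elim - U (γ μ)) * ((zdag-1+X)*(w-1+X))
            = ((lam*W/Real.log 2)*X*Real.log zdag - μ*pb*(zdag-1))*(w-1+X)
            - ((lam*W/Real.log 2)*X*Real.log w - μ*pb*(w-1))*(zdag-1+X) := by
          linear_combination (w-1+X)*hUElim - (zdag-1+X)*hUγ'
        have hlt : U Elim < U (γ μ) := by
          have h6 : (U Elim - U (γ μ)) * ((zdag-1+X)*(w-1+X)) < 0 := hid2.trans_lt hcore
          have := sign_lt (mul_pos hDdag hDw) h6
          linarith
        have hle : U E ≤ U Elim := by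
          rw [hlin E hE0 hc, hlin Elim hElim0.le le_rfl]
          have := mul_le_mul_of_nonneg_right hc (sub_nonneg.2 hμα.le)
          linarith
        linarith
      · obtain ⟨z, hz1, hzd, hEeq, hUEeq⟩ := key2 E hc hEpb
        have hDz : 0 < z - 1 + X := by linarith
        have hzw : z ≠ w := by
          intro h
          apply hne
          rw [hγval, ← h, hEeq]
        have hcore := coreLt (lam*W/Real.log 2) X (μ*pb) w z hc0 hX0 hw1 hz1 hzw
        rw [hQw, mul_zero] at hcore
        have hid2 : (U E - U (γ μ)) * ((z-1+X)*(w-1+X))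
            = ((lam*W/Real.log 2)*X*Real.log z - μ*pb*(z-1))*(w-1+X)
            - ((lam*W/Real.log 2)*X*Real.log w - μ*pb*(w-1))*(z-1+X) := by
          linear_combination (w-1+X)*hUEeq - (z-1+X)*hUγ'
        have h6 : (U E - U (γ μ)) * ((z-1+X)*(w-1+X)) < 0 := hid2.trans_lt hcore
        have := sign_lt (mul_pos hDz hDw) h6
        linarith
    constructor
    · intro E hE
      rcases eq_or_ne E (γ μ) with rfl | hne
      · exact le_rfl
      · exact (main E hE.1 hE.2 hne).le
    · intro E hE heq
      by_contra hne
      exact absurd heq (main E hE.1 hE.2 hne).ne
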